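/- Let S₃ act on ℚ⁴ = ℚ³ ⊕ ℚ by permuting the first three coordinates and acting by the sign character on the last coordinate. The points v = (2,1,0,1) and w = (2,1,0,−1) lie in distinct S₃-orbits, but every S₃-invariant polynomial of degree at most 3 agrees on v and w. -/

import Mathlib

open MvPolynomial

/-- The action of `σ ∈ S₃` on a point of `ℚ³ ⊕ ℚ`: permute the first three coordinates,
and multiply the last coordinate by the sign of `σ`. -/
noncomputable def s3act (σ : Equiv.Perm (Fin 3)) (u : (Fin 3) ⊕ Unit → ℚ) :
    (Fin 3) ⊕ Unit → ℚ :=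
  Sum.elim (fun i => u (Sum.inl (σ⁻¹ i))) (fun _ => ((Equiv.Perm.sign σ : ℤ) : ℚ) * u (Sum.inr ()))

/-- A point of `ℚ³ ⊕ ℚ` with explicit coordinates. -/
def pt (x0 x1 x2 y : ℚ) : (Fin 3) ⊕ Unit → ℚ := Sum.elim ![x0, x1, x2] fun _ => y

lemma arith (a b c k : ℕ) (h : a + b + c + k ≤ 3) :
    (2:ℚ)^a*1^b*0^c*1^k + 1^a*2^b*0^c*(-1:ℚ)^k + 0^a*1^b*2^c*(-1:ℚ)^k
      + 2^a*0^b*1^c*(-1:ℚ)^k + 0^a*2^b*1^c*1^k + 1^a*0^b*2^c*1^k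
    = 2^a*1^b*0^c*(-1:ℚ)^k + 1^a*2^b*0^c*1^k + 0^a*1^b*2^c*1^k
      + 2^a*0^b*1^c*1^k + 0^a*2^b*1^c*(-1:ℚ)^k + 1^a*0^b*2^c*(-1:ℚ)^k := by
  have ha : a ≤ 3 := by omega
  have hb : b ≤ 3 := by omega
  have hc : c ≤ 3 := by omega
  have hk : k ≤ 3 := by omega
  interval_cases a <;> interval_cases b <;> interval_cases c <;> interval_cases k <;>
    first | omega | norm_num

lemma eval_pt_monomial (x0 x1 x2 y : ℚ) (d : (Fin 3) ⊕ Unit →₀ ℕ) (c : ℚ) :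
    eval (pt x0 x1 x2 y) (monomial d c)
      = c * (x0 ^ d (Sum.inl 0) * x1 ^ d (Sum.inl 1) * x2 ^ d (Sum.inl 2) * y ^ d (Sum.inr ())) := by
  rw [eval_monomial, Finsupp.prod_fintype _ _ (fun i => pow_zero _)]
  rw [Fintype.prod_sum_type]
  simp [pt, Fin.prod_univ_three]

lemma mono_key (d : (Fin 3) ⊕ Unit →₀ ℕ) (hd : (d.sum fun _ e => e) ≤ 3) (c : ℚ) :
    eval (pt 2 1 0 1) (monomial d c) + eval (pt 1 2 0 (-1)) (monomial d c)
      + eval (pt 0 1 2 (-1)) (monomial d c) + eval (pt 2 0 1 (-1)) (monomial d c)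
      + eval (pt 0 2 1 1) (monomial d c) + eval (pt 1 0 2 1) (monomial d c)
    = eval (pt 2 1 0 (-1)) (monomial d c) + eval (pt 1 2 0 1) (monomial d c)
      + eval (pt 0 1 2 1) (monomial d c) + eval (pt 2 0 1 1) (monomial d c)
      + eval (pt 0 2 1 (-1)) (monomial d c) + eval (pt 1 0 2 (-1)) (monomial d c) := by
  have hsum : d (Sum.inl 0) + d (Sum.inl 1) + d (Sum.inl 2) + d (Sum.inr ()) ≤ 3 := by
    have : (d.sum fun _ e => e)
        = d (Sum.inl 0) + d (Sum.inl 1) + d (Sum.inl 2) + d (Sum.inr ()) := by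
      rw [Finsupp.sum_fintype _ _ (fun i => rfl), Fintype.sum_sum_type]
      simp [Fin.sum_univ_three]
    omega
  simp only [eval_pt_monomial]
  have := arith (d (Sum.inl 0)) (d (Sum.inl 1)) (d (Sum.inl 2)) (d (Sum.inr ())) hsum
  linear_combination c * this

lemma sum_eval (f : MvPolynomial ((Fin 3) ⊕ Unit) ℚ) (hf : f.totalDegree ≤ 3) :
    eval (pt 2 1 0 1) f + eval (pt 1 2 0 (-1)) f + eval (pt 0 1 2 (-1)) f
      + eval (pt 2 0 1 (-1)) f + eval (pt 0 2 1 1) f + eval (pt 1 0 2 1) f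
    = eval (pt 2 1 0 (-1)) f + eval (pt 1 2 0 1) f + eval (pt 0 1 2 1) f
      + eval (pt 2 0 1 1) f + eval (pt 0 2 1 (-1)) f + eval (pt 1 0 2 (-1)) f := by
  conv_lhs => rw [f.as_sum]
  conv_rhs => rw [f.as_sum]
  simp only [map_sum, ← Finset.sum_add_distrib]
  refine Finset.sum_congr rfl fun d hd => ?_
  exact mono_key d (le_trans (le_totalDegree hd) hf) _

lemma s3act_eq (σ : Equiv.Perm (Fin 3)) (x : Fin 3 → ℚ) (y s : ℚ)
    (hs : ((Equiv.Perm.sign σ : ℤ) : ℚ) = s) (a b c : ℚ)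
    (h0 : x (σ⁻¹ 0) = a) (h1 : x (σ⁻¹ 1) = b) (h2 : x (σ⁻¹ 2) = c) :
    s3act σ (Sum.elim x fun _ => y) = pt a b c (s * y) := by
  funext u
  rcases u with i | ⟨⟩
  · rw [Equiv.Perm.inv_def] at h0 h1 h2; fin_cases i <;> simp [s3act, pt, h0, h1, h2]
  · simp [s3act, pt, hs]

lemma orbv (σ : Equiv.Perm (Fin 3)) (s : ℚ) (hs : ((Equiv.Perm.sign σ : ℤ) : ℚ) = s)
    (a b c : ℚ) (h0 : (![2,1,0] : Fin 3 → ℚ) (σ⁻¹ 0) = a)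
    (h1 : (![2,1,0] : Fin 3 → ℚ) (σ⁻¹ 1) = b) (h2 : (![2,1,0] : Fin 3 → ℚ) (σ⁻¹ 2) = c) :
    s3act σ (Sum.elim ![2,1,0] fun _ => 1) = pt a b c s := by
  have := s3act_eq σ ![2,1,0] 1 s hs a b c h0 h1 h2
  simpa using this

lemma orbw (σ : Equiv.Perm (Fin 3)) (s : ℚ) (hs : ((Equiv.Perm.sign σ : ℤ) : ℚ) = s)
    (a b c : ℚ) (h0 : (![2,1,0] : Fin 3 → ℚ) (σ⁻¹ 0) = a)
    (h1 : (![2,1,0] : Fin 3 → ℚ) (σ⁻¹ 1) = b) (h2 : (![2,1,0] : Fin 3 → ℚ) (σ⁻¹ 2) = c) :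
    s3act σ (Sum.elim ![2,1,0] fun _ => -1) = pt a b c (-s) := by
  have := s3act_eq σ ![2,1,0] (-1) s hs a b c h0 h1 h2
  simpa [mul_neg_one] using this

/-- `v = (2,1,0,1)` and `w = (2,1,0,-1)` lie in distinct `S₃`-orbits of `ℚ³ ⊕ ℚ`
(permutation action plus sign character), yet every `S₃`-invariant polynomial of degree
at most 3 agrees on `v` and `w`. -/
theorem S3_degree_three_invariants_do_not_separate
    (v w : (Fin 3) ⊕ Unit → ℚ)
    (hv : v = Sum.elim ![2, 1, 0] (fun _ => 1))
    (hw : w = Sum.elim ![2, 1, 0] (fun _ => -1)) :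
    (¬ ∃ σ : Equiv.Perm (Fin 3), s3act σ v = w) ∧
    ∀ f : MvPolynomial ((Fin 3) ⊕ Unit) ℚ,
      (∀ (σ : Equiv.Perm (Fin 3)) (u : (Fin 3) ⊕ Unit → ℚ), eval (s3act σ u) f = eval u f) →
      f.totalDegree ≤ 3 → eval v f = eval w f := by
  constructor
  · rintro ⟨σ, h⟩
    have hy := congrFun h (Sum.inr ())
    rw [hv, hw] at hy
    simp [s3act] at hy
    have hinj : Function.Injective (![2,1,0] : Fin 3 → ℚ) := by decide
    have hid : σ = 1 := by
      rw [← inv_eq_one]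
      refine Equiv.ext fun i => hinj ?_
      have := congrFun h (Sum.inl i)
      rw [hv, hw] at this
      simpa [s3act] using this
    rw [hid] at hy
    norm_num at hy
  · intro f hfi hdeg
    have s1 : ((Equiv.Perm.sign (1 : Equiv.Perm (Fin 3)) : ℤ) : ℚ) = 1 := by simp
    have s2 : ((Equiv.Perm.sign (Equiv.swap (0:Fin 3) 1) : ℤ) : ℚ) = -1 := by
      rw [show Equiv.Perm.sign (Equiv.swap (0:Fin 3) 1) = -1 from by decide]; norm_num
    have s3 : ((Equiv.Perm.sign (Equiv.swap (0:Fin 3) 2) : ℤ) : ℚ) = -1 := by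
      rw [show Equiv.Perm.sign (Equiv.swap (0:Fin 3) 2) = -1 from by decide]; norm_num
    have s4 : ((Equiv.Perm.sign (Equiv.swap (1:Fin 3) 2) : ℤ) : ℚ) = -1 := by
      rw [show Equiv.Perm.sign (Equiv.swap (1:Fin 3) 2) = -1 from by decide]; norm_num
    have s5 : ((Equiv.Perm.sign (Equiv.swap (0:Fin 3) 1 * Equiv.swap 1 2) : ℤ) : ℚ) = 1 := by
      rw [show Equiv.Perm.sign (Equiv.swap (0:Fin 3) 1 * Equiv.swap 1 2) = 1 from by decide]; norm_num
    have s6 : ((Equiv.Perm.sign ((Equiv.swap (0:Fin 3) 1 * Equiv.swap 1 2)⁻¹) : ℤ) : ℚ) = 1 := by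
      rw [show Equiv.Perm.sign ((Equiv.swap (0:Fin 3) 1 * Equiv.swap 1 2)⁻¹) = 1 from by decide]
      norm_num
    have A1 := orbv 1 1 s1 2 1 0 (by decide) (by decide) (by decide)
    have A2 := orbv (Equiv.swap 0 1) (-1) s2 1 2 0 (by decide) (by decide) (by decide)
    have A3 := orbv (Equiv.swap 0 2) (-1) s3 0 1 2 (by decide) (by decide) (by decide)
    have A4 := orbv (Equiv.swap 1 2) (-1) s4 2 0 1 (by decide) (by decide) (by decide)
    have A5 := orbv (Equiv.swap 0 1 * Equiv.swap 1 2) 1 s5 0 2 1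
      (by decide) (by decide) (by decide)
    have A6 := orbv ((Equiv.swap 0 1 * Equiv.swap 1 2)⁻¹) 1 s6 1 0 2
      (by decide) (by decide) (by decide)
    have B1 := orbw 1 1 s1 2 1 0 (by decide) (by decide) (by decide)
    have B2 := orbw (Equiv.swap 0 1) (-1) s2 1 2 0 (by decide) (by decide) (by decide)
    have B3 := orbw (Equiv.swap 0 2) (-1) s3 0 1 2 (by decide) (by decide) (by decide)
    have B4 := orbw (Equiv.swap 1 2) (-1) s4 2 0 1 (by decide) (by decide) (by decide)
    have B5 := orbw (Equiv.swap 0 1 * Equiv.swap 1 2) 1 s5 0 2 1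
      (by decide) (by decide) (by decide)
    have B6 := orbw ((Equiv.swap 0 1 * Equiv.swap 1 2)⁻¹) 1 s6 1 0 2
      (by decide) (by decide) (by decide)
    rw [← hv] at A1 A2 A3 A4 A5 A6
    rw [← hw] at B1 B2 B3 B4 B5 B6
    have E1 : eval (pt 2 1 0 1) f = eval v f := by rw [← A1, hfi]
    have E2 : eval (pt 1 2 0 (-1)) f = eval v f := by rw [← A2, hfi]
    have E3 : eval (pt 0 1 2 (-1)) f = eval v f := by rw [← A3, hfi]
    have E4 : eval (pt 2 0 1 (-1)) f = eval v f := by rw [← A4, hfi]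
    have E5 : eval (pt 0 2 1 1) f = eval v f := by rw [← A5, hfi]
    have E6 : eval (pt 1 0 2 1) f = eval v f := by rw [← A6, hfi]
    have F1 : eval (pt 2 1 0 (-(1:ℚ))) f = eval w f := by rw [← B1, hfi]
    have F2 : eval (pt 1 2 0 (-(-1:ℚ))) f = eval w f := by rw [← B2, hfi]
    have F3 : eval (pt 0 1 2 (-(-1:ℚ))) f = eval w f := by rw [← B3, hfi]
    have F4 : eval (pt 2 0 1 (-(-1:ℚ))) f = eval w f := by rw [← B4, hfi]
    have F5 : eval (pt 0 2 1 (-(1:ℚ))) f = eval w f := by rw [← B5, hfi]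
    have F6 : eval (pt 1 0 2 (-(1:ℚ))) f = eval w f := by rw [← B6, hfi]
    norm_num at F1 F2 F3 F4 F5 F6
    have S := sum_eval f hdeg
    rw [E1, E2, E3, E4, E5, E6, F1, F2, F3, F4, F5, F6] at S
    linarith
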